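/- There exist no real numbers x₁, x₂, y₁, y₂, v₃₁, v₃₂, each in {−1,+1}, simultaneously satisfying x₁·x₂ = −1, y₁·y₂ = −1, v₃₁·x₁·y₂ = +1, v₃₂·y₁·x₂ = +1, and v₃₁·v₃₂ = −1. Consequently, in any hidden variable model the sets B₁, B₂, B₃, C₁, C₂ have empty common intersection: B₁ ∩ B₂ ∩ B₃ ∩ C₁ ∩ C₂ = ∅. -/

import Mathlib

variable {Ω : Type*}

/-- The row constraint set `R_i`: all three values in row `i` lie in {−1,+1}
and their product is `+1`. -/
def Rset (V : Fin 3 → Fin 3 → Ω → ℝ) (i : Fin 3) : Set Ω :=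
  {ω | (∀ j : Fin 3, V i j ω = -1 ∨ V i j ω = 1) ∧ V i 0 ω * V i 1 ω * V i 2 ω = 1}

/-- The column constraint set `C_j` for the first two columns: all three values in
column `j` lie in {−1,+1} and their product is `+1`. -/
def Cset (V : Fin 3 → Fin 3 → Ω → ℝ) (j : Fin 3) : Set Ω :=
  {ω | (∀ i : Fin 3, V i j ω = -1 ∨ V i j ω = 1) ∧ V 0 j ω * V 1 j ω * V 2 j ω = 1}

/-- The third column constraint set `C₃`: all three values in column 3 lie in
{−1,+1} and their product is `−1`. -/
def C3set (V : Fin 3 → Fin 3 → Ω → ℝ) : Set Ω :=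
  {ω | (∀ i : Fin 3, V i 2 ω = -1 ∨ V i 2 ω = 1) ∧ V 0 2 ω * V 1 2 ω * V 2 2 ω = -1}

/-- The set `B_i`: the first two values in row `i` lie in {−1,+1} and their
product is `−1`. -/
def Bset (V : Fin 3 → Fin 3 → Ω → ℝ) (i : Fin 3) : Set Ω :=
  {ω | (V i 0 ω = -1 ∨ V i 0 ω = 1) ∧ (V i 1 ω = -1 ∨ V i 1 ω = 1) ∧
    V i 0 ω * V i 1 ω = -1}

/-- No sign assignments `x₁,x₂,y₁,y₂,v₃₁,v₃₂ ∈ {−1,+1}` satisfy all five Cabello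
relations, and consequently `B₁ ∩ B₂ ∩ B₃ ∩ C₁ ∩ C₂ = ∅` in any hidden variable
model. -/
theorem cabello_relations_unsatisfiable :
    (¬ ∃ x₁ x₂ y₁ y₂ v₃₁ v₃₂ : ℝ,
        (x₁ = -1 ∨ x₁ = 1) ∧ (x₂ = -1 ∨ x₂ = 1) ∧ (y₁ = -1 ∨ y₁ = 1) ∧
        (y₂ = -1 ∨ y₂ = 1) ∧ (v₃₁ = -1 ∨ v₃₁ = 1) ∧ (v₃₂ = -1 ∨ v₃₂ = 1) ∧
        x₁ * x₂ = -1 ∧ y₁ * y₂ = -1 ∧ v₃₁ * x₁ * y₂ = 1 ∧ v₃₂ * y₁ * x₂ = 1 ∧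
        v₃₁ * v₃₂ = -1) ∧
    ∀ (Ω : Type*) (V : Fin 3 → Fin 3 → Ω → ℝ),
      Bset V 0 ∩ Bset V 1 ∩ Bset V 2 ∩ Cset V 0 ∩ Cset V 1 = ∅ := by
  have key : ¬ ∃ x₁ x₂ y₁ y₂ v₃₁ v₃₂ : ℝ,
        (x₁ = -1 ∨ x₁ = 1) ∧ (x₂ = -1 ∨ x₂ = 1) ∧ (y₁ = -1 ∨ y₁ = 1) ∧
        (y₂ = -1 ∨ y₂ = 1) ∧ (v₃₁ = -1 ∨ v₃₁ = 1) ∧ (v₃₂ = -1 ∨ v₃₂ = 1) ∧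
        x₁ * x₂ = -1 ∧ y₁ * y₂ = -1 ∧ v₃₁ * x₁ * y₂ = 1 ∧ v₃₂ * y₁ * x₂ = 1 ∧
        v₃₁ * v₃₂ = -1 := by
    rintro ⟨x₁, x₂, y₁, y₂, v₃₁, v₃₂, h1, h2, h3, h4, h5, h6, e1, e2, e3, e4, e5⟩
    rcases h1 with h1 | h1 <;> rcases h2 with h2 | h2 <;> rcases h3 with h3 | h3 <;>
      rcases h4 with h4 | h4 <;> rcases h5 with h5 | h5 <;> rcases h6 with h6 | h6 <;>
      subst h1 <;> subst h2 <;> subst h3 <;> subst h4 <;> subst h5 <;> subst h6 <;>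
      (revert e1 e2 e3 e4 e5; norm_num)
  refine ⟨key, fun Ω V => ?_⟩
  ext ω
  simp only [Set.mem_inter_iff, Set.mem_empty_iff_false, iff_false, Bset, Cset,
    Set.mem_setOf_eq]
  rintro ⟨⟨⟨⟨⟨b01, b02, b0⟩, b11, b12, b1⟩, b21, b22, b2⟩, c0m, c0⟩, c1m, c1⟩
  exact key ⟨V 0 0 ω, V 0 1 ω, V 1 1 ω, V 1 0 ω, V 2 0 ω, V 2 1 ω,
    b01, b02, b12, b11, c0m 2, c1m 2, b0, by linarith [mul_comm (V 1 0 ω) (V 1 1 ω)],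
    by nlinarith [c0], by nlinarith [c1], b2⟩
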